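/- All zeros of $A_n^\gamma(z)=\sum_{k=1}^n\gamma_k g_k(z)$ lie in the union of discs $\bigcup_{j=1}^{n-1}\{z\in\mathbb{C}: |z-[(1-\gamma_j)z_j+\gamma_j z_n]|\le (n-2)\gamma_j|z_n-z_j|\}$. -/

import Mathlib

open Polynomial Finset

theorem zeros_of_convex_combination_in_gershgorin_discs
    (n : ℕ) (hn : 2 ≤ n) (z : ℕ → ℂ) (γ : ℕ → ℝ)
    (hγ0 : ∀ k ∈ Finset.range n, 0 ≤ γ k)
    (hγ1 : ∑ k ∈ Finset.range n, γ k = 1)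
    (w : ℂ)
    (hw : (∑ k ∈ Finset.range n, C ((γ k : ℂ)) *
        ∏ j ∈ (Finset.range n).erase k, (X - C (z j))).IsRoot w) :
    ∃ j ∈ Finset.range (n - 1),
      ‖w - (((1 - γ j : ℝ) : ℂ) * z j + (γ j : ℝ) * z (n - 1))‖
        ≤ ((n : ℝ) - 2) * γ j * ‖z (n - 1) - z j‖ := by
  obtain ⟨m, rfl⟩ : ∃ m, n = m + 1 := ⟨n - 1, by omega⟩
  have hm : 1 ≤ m := by omega
  simp only [Nat.add_sub_cancel]
  by_contra hcon
  push_neg at hcon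
  set a : ℕ → ℂ := fun k => w - z k with ha
  set b : ℕ → ℂ := fun k => (γ k : ℂ) * (z m - z k) with hb
  -- rewrite the disc conditions
  have hcon' : ∀ k ∈ Finset.range m, ((m : ℝ) - 1) * ‖b k‖
      < ‖a k - b k‖ := by
    intro k hk
    have h1 := hcon k hk
    have h2 : w - (((1 - γ k : ℝ) : ℂ) * z k + ((γ k : ℝ) : ℂ) * z m) = a k - b k := by
      simp only [ha, hb]; push_cast; ring
    have hγk : 0 ≤ γ k := by
      apply hγ0 k
      simp only [Finset.mem_range] at hk ⊢
      omega
    have h3 : ‖b k‖ = γ k * ‖z m - z k‖ := by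
      simp only [hb, norm_mul, Complex.norm_real, Real.norm_eq_abs, _root_.abs_of_nonneg hγk]
    have h4 : ((m : ℝ) + 1) - 2 = (m : ℝ) - 1 := by ring
    rw [h2] at h1
    rw [h3]
    calc ((m : ℝ) - 1) * (γ k * ‖z m - z k‖)
        = (((m : ℕ) + 1 : ℝ) - 2) * γ k * ‖z m - z k‖ := by ring
      _ < _ := by exact_mod_cast h1
  -- evaluate the root hypothesis
  have h0 : ∑ k ∈ Finset.range (m + 1), (γ k : ℂ) *
      ∏ j ∈ (Finset.range (m + 1)).erase k, (w - z j) = 0 := by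
    simpa [Polynomial.IsRoot, eval_finset_sum, eval_prod] using hw
  -- key identity : P = ∑ b k * Q k
  have heq : ∏ j ∈ Finset.range m, a j
      = ∑ k ∈ Finset.range m, b k * ∏ j ∈ (Finset.range m).erase k, a j := by
    have e1 : (Finset.range (m + 1)).erase m = Finset.range m := by
      rw [Finset.range_add_one, Finset.erase_insert Finset.notMem_range_self]
    have e2 : ∀ k ∈ Finset.range m,
        ∏ j ∈ (Finset.range (m + 1)).erase k, (w - z j)
          = (w - z m) * ∏ j ∈ (Finset.range m).erase k, a j := by
      intro k hk
      have hkm : k ≠ m := by simp at hk; omega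
      rw [Finset.range_add_one, Finset.erase_insert_of_ne (Ne.symm hkm),
        Finset.prod_insert (by simp [Finset.mem_erase])]
    rw [Finset.sum_range_succ, e1, Finset.sum_congr rfl
      (fun k hk => by rw [e2 k hk])] at h0
    have hsg : (γ m : ℂ) = 1 - ∑ k ∈ Finset.range m, (γ k : ℂ) := by
      have := hγ1
      rw [Finset.sum_range_succ] at this
      have hr : γ m = 1 - ∑ k ∈ Finset.range m, γ k := by linarith
      rw [hr]
      push_cast
      ring
    have e3 : ∀ k ∈ Finset.range m,
        (γ k : ℂ) * ((w - z m) * ∏ j ∈ (Finset.range m).erase k, a j)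
        = (γ k : ℂ) * ∏ j ∈ Finset.range m, a j
          - b k * ∏ j ∈ (Finset.range m).erase k, a j := by
      intro k hk
      have hP : a k * ∏ j ∈ (Finset.range m).erase k, a j = ∏ j ∈ Finset.range m, a j :=
        Finset.mul_prod_erase _ _ hk
      rw [← hP]
      simp only [ha, hb]
      ring
    rw [Finset.sum_congr rfl e3, Finset.sum_sub_distrib, ← Finset.sum_mul, hsg] at h0
    have : (∑ k ∈ Finset.range m, (γ k : ℂ)) * ∏ j ∈ Finset.range m, a j
        - ∑ k ∈ Finset.range m, b k * ∏ j ∈ (Finset.range m).erase k, a j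
        + (1 - ∑ k ∈ Finset.range m, (γ k : ℂ)) * ∏ j ∈ Finset.range m, a j = 0 := h0
    linear_combination this
  -- Gershgorin argument with x k = b k * Q k
  set x : ℕ → ℂ := fun k => b k * ∏ j ∈ (Finset.range m).erase k, a j with hx
  have hPx : ∏ j ∈ Finset.range m, a j = ∑ k ∈ Finset.range m, x k := heq
  by_cases hall : ∀ k ∈ Finset.range m, x k = 0
  · -- then P = 0, some a i = 0
    have hP0 : ∏ j ∈ Finset.range m, a j = 0 := by
      rw [hPx, Finset.sum_eq_zero hall]
    obtain ⟨i, hi, hai⟩ := Finset.prod_eq_zero_iff.mp hP0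
    have hci := hcon' i hi
    rw [hai, zero_sub, norm_neg] at hci
    by_cases hbi : b i = 0
    · simp [hbi] at hci
    · have hbi' : 0 < ‖b i‖ := norm_pos_iff.mpr hbi
      by_cases hm2 : 2 ≤ m
      · have h2 : (2:ℝ) ≤ (m:ℝ) := by exact_mod_cast hm2
        nlinarith
      have hm1 : m = 1 := by omega
      subst hm1
      have hi0 : i = 0 := by simpa using hi
      have := hall i hi
      rw [hi0] at this
      simp [hx] at this
      exact hbi (by rw [hi0]; exact this)
  · push_neg at hall
    obtain ⟨k0, hk0, hxk0⟩ := hall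
    obtain ⟨k, hk, hkmax⟩ := Finset.exists_max_image (Finset.range m)
      (fun j => ‖x j‖) ⟨k0, hk0⟩
    have hxk : 0 < ‖x k‖ :=
      lt_of_lt_of_le (norm_pos_iff.mpr hxk0) (hkmax k0 hk0)
    -- (a k - b k) * x k = b k * ∑_{j ≠ k} x j
    have hkey : (a k - b k) * x k = b k * ∑ j ∈ (Finset.range m).erase k, x j := by
      have hP : a k * ∏ j ∈ (Finset.range m).erase k, a j = ∏ j ∈ Finset.range m, a j :=
        Finset.mul_prod_erase _ _ hk
    
      have h5 : a k * x k = b k * ∑ j ∈ Finset.range m, x j := by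
        rw [← hPx, ← hP, hx]; ring
      have h6 : ∑ j ∈ Finset.range m, x j
          = x k + ∑ j ∈ (Finset.range m).erase k, x j :=
        (Finset.add_sum_erase _ _ hk).symm
      rw [h6] at h5
      linear_combination h5
    have hcard : ((Finset.range m).erase k).card = m - 1 := by
      rw [Finset.card_erase_of_mem hk, Finset.card_range]
    have hineq : ‖a k - b k‖ * ‖x k‖
        ≤ ‖b k‖ * (((m : ℝ) - 1) * ‖x k‖) := by
      rw [← norm_mul, hkey, norm_mul]
      gcongr
      calc ‖∑ j ∈ (Finset.range m).erase k, x j‖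
          ≤ ∑ j ∈ (Finset.range m).erase k, ‖x j‖ :=
            norm_sum_le _ _
        _ ≤ ∑ j ∈ (Finset.range m).erase k, ‖x k‖ :=
            Finset.sum_le_sum (fun j hj => hkmax j (Finset.mem_of_mem_erase hj))
        _ = ((m : ℝ) - 1) * ‖x k‖ := by
            rw [Finset.sum_const, hcard, nsmul_eq_mul]
            congr 1
            have : (1:ℕ) ≤ m := hm
            push_cast [Nat.cast_sub hm]
            ring
    have hmul := mul_lt_mul_of_pos_right (hcon' k hk) hxk
    linarith [hineq]
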